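/- arXiv:0910.4794 — 2 statements merged into one kernel-verified Lean document; each statement's English description precedes it below -/
import Mathlib

section
/- In Q[[q, t]], the unique formal power series solution A(t) (with coefficients in Q[[q]]) of the functional equation A(t) = (qt/(1-qt)) * (1 + B_1) + (qt/(1-qt)^2) * A_1, where A_1 = A(1) and B_1 = (d/dt)[A(t)/t] at t = 1, satisfies A_1 = q(1-q)^3/(1 - 5q + 7q^2 - 4q^3). -/
open PowerSeries

private noncomputable def Spart (a : ℕ → PowerSeries ℚ) (N : ℕ) : PowerSeries ℚ :=
  ∑ m ∈ Finset.range (N + 1), a m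

private noncomputable def Tpart (a : ℕ → PowerSeries ℚ) (N : ℕ) : PowerSeries ℚ :=
  ∑ m ∈ Finset.range (N + 1), ((m : PowerSeries ℚ) - 1) * a m

private lemma Spart_succ (a : ℕ → PowerSeries ℚ) (N : ℕ) :
    Spart a (N + 1) = Spart a N + a (N + 1) := Finset.sum_range_succ a (N + 1)

private lemma Tpart_succ (a : ℕ → PowerSeries ℚ) (N : ℕ) :
    Tpart a (N + 1) = Tpart a N + (((N : PowerSeries ℚ) + 1) - 1) * a (N + 1) := by
  have := Finset.sum_range_succ (fun m => ((m : PowerSeries ℚ) - 1) * a m) (N + 1)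
  simpa [Tpart] using this

private lemma coeff_natsub (m n : ℕ) (f : PowerSeries ℚ) :
    coeff n (((m : PowerSeries ℚ) - 1) * f) = ((m : ℚ) - 1) * coeff n f := by
  rw [show ((m : PowerSeries ℚ) - 1) = C ((m : ℚ) - 1) by rw [map_sub, map_one, map_natCast], coeff_C_mul]

private lemma aux_key (a : ℕ → PowerSeries ℚ) (A₁ B₁ : PowerSeries ℚ)
    (horder : ∀ m n : ℕ, n < m → coeff n (a m) = 0)
    (hA1 : ∀ n : ℕ, coeff n A₁ = ∑ m ∈ Finset.range (n + 1), coeff n (a m))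
    (hB1 : ∀ n : ℕ, coeff n B₁ =
      ∑ m ∈ Finset.range (n + 1), ((m : ℚ) - 1) * coeff n (a m))
    (h0 : a 0 = 0)
    (h1 : a 1 = X * ((1 + B₁) + A₁))
    (h2 : a 2 = 2 * X * a 1 - X ^ 2 * (1 + B₁))
    (hrec : ∀ m : ℕ, a (m + 3) = 2 * X * a (m + 2) - X ^ 2 * a (m + 1)) :
    A₁ * (1 - 5 * X + 7 * X ^ 2 - 4 * X ^ 3) = X * (1 - X) ^ 3 := by
  -- divisibility facts
  have dvd_a : ∀ m : ℕ, (X : PowerSeries ℚ) ^ m ∣ a m := fun m =>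
    X_pow_dvd_iff.mpr fun n hn => horder m n hn
  have hSc : ∀ n N : ℕ, n ≤ N → coeff n A₁ = coeff n (Spart a N) := by
    intro n N hnN
    rw [Spart, map_sum, hA1 n]
    exact Finset.sum_subset (Finset.range_subset_range.mpr (by omega))
      (fun m _ hm => horder m n (by simp at hm ⊢; omega))
  have hTc : ∀ n N : ℕ, n ≤ N → coeff n B₁ = coeff n (Tpart a N) := by
    intro n N hnN
    rw [Tpart, map_sum, hB1 n]
    simp only [coeff_natsub]
    exact Finset.sum_subset (Finset.range_subset_range.mpr (by omega))
      (fun m _ hm => by rw [horder m n (by simp at hm ⊢; omega), mul_zero])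
  have dvdS : ∀ N : ℕ, (X : PowerSeries ℚ) ^ (N + 1) ∣ (A₁ - Spart a N) := by
    intro N
    refine X_pow_dvd_iff.mpr fun n hn => ?_
    rw [map_sub, hSc n N (by omega), sub_self]
  have dvdT : ∀ N : ℕ, (X : PowerSeries ℚ) ^ (N + 1) ∣ (B₁ - Tpart a N) := by
    intro N
    refine X_pow_dvd_iff.mpr fun n hn => ?_
    rw [map_sub, hTc n N (by omega), sub_self]
  -- closed forms for the partial sums
  have hS : ∀ k : ℕ, (1 - X) ^ 2 * Spart a (k + 2)
      = a 1 - X ^ 2 * (1 + B₁) - 2 * X * a (k + 2) + X ^ 2 * (a (k + 2) + a (k + 1)) := by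
    intro k
    induction k with
    | zero =>
      have e : Spart a 2 = a 0 + a 1 + a 2 := by
        simp [Spart, Finset.sum_range_succ]
      rw [e]
      linear_combination h2 + (1 - (X : PowerSeries ℚ)) ^ 2 * h0
    | succ k ih =>
      rw [show k + 1 + 2 = (k + 2) + 1 by ring, Spart_succ]
      linear_combination ih + hrec k
  have hT : ∀ k : ℕ, (1 - X) ^ 2 * Tpart a (k + 2)
      = 2 * X * (1 - X) * Spart a (k + 2) - X ^ 2 * (1 + B₁)
        - 2 * X * ((k : PowerSeries ℚ) + 2) * a (k + 2)
        + X ^ 2 * (((k : PowerSeries ℚ) + 3) * a (k + 2) + ((k : PowerSeries ℚ) + 2) * a (k + 1)) := by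
    intro k
    induction k with
    | zero =>
      have e : Tpart a 2 = ((0 : PowerSeries ℚ) - 1) * a 0 + ((1 : PowerSeries ℚ) - 1) * a 1
          + ((2 : PowerSeries ℚ) - 1) * a 2 := by
        simp [Tpart, Finset.sum_range_succ]
      have eS : Spart a 2 = a 0 + a 1 + a 2 := by
        simp [Spart, Finset.sum_range_succ]
      rw [e, eS]
      push_cast
      linear_combination h2 + ((X : PowerSeries ℚ) ^ 2 - 1) * h0
    | succ k ih =>
      rw [show k + 1 + 2 = (k + 2) + 1 by ring, Tpart_succ, Spart_succ]
      push_cast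
      linear_combination ih + ((k : PowerSeries ℚ) + 2) * hrec k
  -- the two functional identities
  have hi : (1 - X) ^ 2 * A₁ = X * ((1 + B₁) + A₁) - X ^ 2 * (1 + B₁) := by
    rw [← sub_eq_zero]
    ext n
    rw [map_zero]
    have hdvd : (X : PowerSeries ℚ) ^ (n + 1) ∣
        ((1 - X) ^ 2 * A₁ - (X * ((1 + B₁) + A₁) - X ^ 2 * (1 + B₁))) := by
      have hE : (1 - (X : PowerSeries ℚ)) ^ 2 * A₁ - (X * ((1 + B₁) + A₁) - X ^ 2 * (1 + B₁))
          = (1 - X) ^ 2 * (A₁ - Spart a (n + 2))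
            - 2 * X * a (n + 2) + X ^ 2 * (a (n + 2) + a (n + 1)) := by
        linear_combination hS n + h1
      rw [hE]
      have d1 : (X : PowerSeries ℚ) ^ (n + 1) ∣ (1 - X) ^ 2 * (A₁ - Spart a (n + 2)) :=
        ((pow_dvd_pow X (by omega)).trans (dvdS (n + 2))).mul_left _
      have d2 : (X : PowerSeries ℚ) ^ (n + 1) ∣ 2 * X * a (n + 2) :=
        ((pow_dvd_pow X (by omega)).trans (dvd_a (n + 2))).mul_left _
      have d3 : (X : PowerSeries ℚ) ^ (n + 1) ∣ X ^ 2 * (a (n + 2) + a (n + 1)) :=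
        (dvd_add ((pow_dvd_pow X (by omega)).trans (dvd_a (n + 2)))
          ((pow_dvd_pow X (by omega)).trans (dvd_a (n + 1)))).mul_left _
      exact dvd_add (dvd_sub d1 d2) d3
    exact X_pow_dvd_iff.mp hdvd n (by omega)
  have hii : (1 - X) ^ 2 * B₁ = 2 * X * (1 - X) * A₁ - X ^ 2 * (1 + B₁) := by
    rw [← sub_eq_zero]
    ext n
    rw [map_zero]
    have hdvd : (X : PowerSeries ℚ) ^ (n + 1) ∣
        ((1 - X) ^ 2 * B₁ - (2 * X * (1 - X) * A₁ - X ^ 2 * (1 + B₁))) := by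
      have hE : (1 - (X : PowerSeries ℚ)) ^ 2 * B₁ - (2 * X * (1 - X) * A₁ - X ^ 2 * (1 + B₁))
          = (1 - X) ^ 2 * (B₁ - Tpart a (n + 2))
            - 2 * X * (1 - X) * (A₁ - Spart a (n + 2))
            - 2 * X * (((n : PowerSeries ℚ) + 2) * a (n + 2))
            + X ^ 2 * (((n : PowerSeries ℚ) + 3) * a (n + 2) + ((n : PowerSeries ℚ) + 2) * a (n + 1)) := by
        linear_combination hT n
      rw [hE]
      have d1 : (X : PowerSeries ℚ) ^ (n + 1) ∣ (1 - X) ^ 2 * (B₁ - Tpart a (n + 2)) :=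
        ((pow_dvd_pow X (by omega)).trans (dvdT (n + 2))).mul_left _
      have d2 : (X : PowerSeries ℚ) ^ (n + 1) ∣ 2 * X * (1 - X) * (A₁ - Spart a (n + 2)) :=
        ((pow_dvd_pow X (by omega)).trans (dvdS (n + 2))).mul_left _
      have d3 : (X : PowerSeries ℚ) ^ (n + 1) ∣ 2 * X * (((n : PowerSeries ℚ) + 2) * a (n + 2)) :=
        (((pow_dvd_pow X (by omega)).trans (dvd_a (n + 2))).mul_left _).mul_left _
      have d4 : (X : PowerSeries ℚ) ^ (n + 1) ∣
          X ^ 2 * (((n : PowerSeries ℚ) + 3) * a (n + 2) + ((n : PowerSeries ℚ) + 2) * a (n + 1)) :=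
        (dvd_add (((pow_dvd_pow X (by omega)).trans (dvd_a (n + 2))).mul_left _)
          (((pow_dvd_pow X (by omega)).trans (dvd_a (n + 1))).mul_left _)).mul_left _
      exact dvd_add (dvd_sub (dvd_sub d1 d2) d3) d4
    exact X_pow_dvd_iff.mp hdvd n (by omega)
  linear_combination (1 - 2 * (X : PowerSeries ℚ) + 2 * X ^ 2) * hi
    + (X : PowerSeries ℚ) * (1 - X) * hii

-- We work in `ℚ[[q]][[t]]`: `R = ℚ[[q]]` with variable `q = X : ℚ[[q]]`, and the
-- outer variable of `R[[t]]` is `t`.  Evaluation at `t = 1` and the derivative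
-- `d/dt [A(t)/t]` at `t = 1` are interpreted via the coefficient sums
-- `A₁ = ∑_m [tᵐ]A` and `B₁ = ∑_m (m-1)·[tᵐ]A`, which converge q-adically
-- because `[tᵐ]A` has q-adic order at least `m` (hypothesis `horder`).

/-- The unique formal power series solution `A(t) ∈ ℚ[[q]][[t]]` of the `w = 0`
Temperley equation `A(t) = (qt/(1-qt))(1 + B₁) + (qt/(1-qt)²)·A₁` (stated here
multiplied through by the unit `(1-qt)²`), where `A₁ = A(1)` and
`B₁ = d/dt[A(t)/t]|_{t=1}`, satisfies `A₁ = q(1-q)³/(1 - 5q + 7q² - 4q³)`. -/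
theorem temperley_w_zero_solution
    (A : PowerSeries (PowerSeries ℚ)) (A₁ B₁ : PowerSeries ℚ)
    (horder : ∀ m n : ℕ, n < m → (coeff n) ((coeff m) A) = 0)
    (hA1 : ∀ n : ℕ, (coeff n) A₁ =
      ∑ m ∈ Finset.range (n + 1), (coeff n) ((coeff m) A))
    (hB1 : ∀ n : ℕ, (coeff n) B₁ =
      ∑ m ∈ Finset.range (n + 1), ((m : ℚ) - 1) * (coeff n) ((coeff m) A))
    (heq : A * (1 - PowerSeries.C (X : PowerSeries ℚ) * X) ^ 2 =
      PowerSeries.C (X : PowerSeries ℚ) * X *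
          (1 - PowerSeries.C (X : PowerSeries ℚ) * X) *
          PowerSeries.C (1 + B₁) +
        PowerSeries.C (X : PowerSeries ℚ) * X *
          PowerSeries.C A₁) :
    A₁ = (X : PowerSeries ℚ) * (1 - X) ^ 3 * (1 - 5 * X + 7 * X ^ 2 - 4 * X ^ 3)⁻¹ := by
  have heq2 : A = (PowerSeries.C (X : PowerSeries ℚ) *
        (A + A + PowerSeries.C (1 + B₁) + PowerSeries.C A₁)) * X
      - (PowerSeries.C (X : PowerSeries ℚ) *
          (PowerSeries.C (X : PowerSeries ℚ) *
            (A + PowerSeries.C (1 + B₁)))) * X * X := by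
    linear_combination heq
  have h0 := congrArg (coeff 0) heq2
  have h1 := congrArg (coeff (0 + 1)) heq2
  have h2 := congrArg (coeff (0 + 1 + 1)) heq2
  have hr := fun m : ℕ => congrArg (coeff (m + 1 + 1 + 1)) heq2
  simp only [map_sub, map_add, coeff_succ_mul_X, coeff_zero_mul_X, coeff_C_mul, coeff_zero_C,
    coeff_C, Nat.succ_ne_zero, if_true, if_false, add_zero, mul_zero, sub_zero, zero_sub,
    zero_add] at h0 h1 h2 hr
  rw [show (1 + 1 : ℕ) = 2 from rfl] at h2
  have h1' : coeff 1 A = (X : PowerSeries ℚ) * ((1 + B₁) + A₁) := by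
    rw [h1, h0]; ring
  have h2' : coeff 2 A = 2 * (X : PowerSeries ℚ) * coeff 1 A
      - (X : PowerSeries ℚ) ^ 2 * (1 + B₁) := by
    rw [h2, h0]; ring
  have hrec' : ∀ m : ℕ, coeff (m + 3) A =
      2 * (X : PowerSeries ℚ) * coeff (m + 2) A
      - (X : PowerSeries ℚ) ^ 2 * coeff (m + 1) A := by
    intro m
    have h := hr m
    rw [show m + 1 + 1 + 1 = m + 3 from rfl] at h
    rw [h]; ring
  have key := aux_key (fun m => coeff m A) A₁ B₁ horder hA1 hB1 h0 h1' h2' hrec'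
  have hD : constantCoeff (1 - 5 * X + 7 * X ^ 2 - 4 * X ^ 3 : PowerSeries ℚ) ≠ 0 := by
    simp [map_sub, map_add, map_one, map_mul, map_pow, constantCoeff_X]
  calc A₁ = A₁ * ((1 - 5 * X + 7 * X ^ 2 - 4 * X ^ 3) * (1 - 5 * X + 7 * X ^ 2 - 4 * X ^ 3)⁻¹) := by
        rw [PowerSeries.mul_inv_cancel _ hD, mul_one]
    _ = (A₁ * (1 - 5 * X + 7 * X ^ 2 - 4 * X ^ 3)) * (1 - 5 * X + 7 * X ^ 2 - 4 * X ^ 3)⁻¹ := by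
        ring
    _ = (X : PowerSeries ℚ) * (1 - X) ^ 3 * (1 - 5 * X + 7 * X ^ 2 - 4 * X ^ 3)⁻¹ := by
        rw [key]
end

section
/- Every simplex-duplex polyomino either ends (rightmost column) with a simplex column, or its rightmost column is duplex and the column immediately to its left is a simplex column; in the latter case, removing the rightmost column's two components and recording (i) the polyomino formed by all remaining columns and (ii) the positions of the two components against the second-last column gives a bijection between simplex-duplex polyominoes ending in a duplex column whose second-last column has n cells, and triples consisting of an element of S with last column of height n, a choice of two non-adjacent cells in that last column, and an ordered pair of positive integers (the component heights). -/
/-!  Polyominoes are modelled as finite, edge-connected sets of unit cells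
(indexed by their integer coordinates).  `colP P x` is the set of
y-coordinates of cells of the column of `P` at abscissa `x`, and
`comps s` is its number of connected components (number of run-starts).
A simplex-duplex polyomino has at most two components per column and no two
adjacent duplex (two-component) columns.  For a duplex column `s`,
`lowTop s` is the top of its lower component and `upBot s` the bottom of its
upper component. -/


noncomputable def fmax (s : Finset ℤ) : ℤ := sSup (↑s : Set ℤ)
noncomputable def fmin (s : Finset ℤ) : ℤ := sInf (↑s : Set ℤ)

def cellAdj (a b : ℤ × ℤ) : Prop :=
  (a.1 = b.1 ∧ (a.2 = b.2 + 1 ∨ b.2 = a.2 + 1)) ∨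
  (a.2 = b.2 ∧ (a.1 = b.1 + 1 ∨ b.1 = a.1 + 1))

def IsPolyomino (P : Finset (ℤ × ℤ)) : Prop :=
  P.Nonempty ∧ ∀ a ∈ P, ∀ b ∈ P,
    Relation.ReflTransGen (fun u v => u ∈ P ∧ v ∈ P ∧ cellAdj u v) a b

def colP (P : Finset (ℤ × ℤ)) (x : ℤ) : Finset ℤ :=
  (P.filter (fun c => c.1 = x)).image Prod.snd

def comps (s : Finset ℤ) : ℕ := (s.filter (fun y => y - 1 ∉ s)).card

def IsColumnDuplex (P : Finset (ℤ × ℤ)) : Prop :=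
  IsPolyomino P ∧ ∀ x : ℤ, comps (colP P x) ≤ 2

def IsSimplexDuplex (P : Finset (ℤ × ℤ)) : Prop :=
  IsColumnDuplex P ∧ ∀ x : ℤ, comps (colP P x) = 2 →
    comps (colP P (x + 1)) ≤ 1 ∧ comps (colP P (x - 1)) ≤ 1

noncomputable def xmax (P : Finset (ℤ × ℤ)) : ℤ := fmax (P.image Prod.fst)

noncomputable def upBot (s : Finset ℤ) : ℤ := fmax (s.filter (fun y => y - 1 ∉ s))
noncomputable def lowTop (s : Finset ℤ) : ℤ := fmax (s.filter (fun y => y < upBot s))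
noncomputable def lowerComp (s : Finset ℤ) : Finset ℤ := s.filter (fun y => y ≤ lowTop s)
noncomputable def upperComp (s : Finset ℤ) : Finset ℤ := s.filter (fun y => upBot s ≤ y)
noncomputable def holeOf (s : Finset ℤ) : Finset ℤ := Finset.Ioo (lowTop s) (upBot s)
def sharesEdge (a b : Finset ℤ) : Prop := (a ∩ b).Nonempty

/-- The decomposition map: remove the (duplex) last column of `P`, and record
the y-coordinates of the cell of the second-last column right-adjacent to the
top of the lower component and of the cell right-adjacent to the bottom of the
upper component, together with the heights of the two components. -/
noncomputable def lastColSplit (P : Finset (ℤ × ℤ)) :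
    Finset (ℤ × ℤ) × (ℤ × ℤ) × (ℤ × ℤ) :=
  let s := colP P (xmax P)
  (P.filter (fun p => p.1 ≠ xmax P), (lowTop s, upBot s),
    (lowTop s - fmin s + 1, fmax s - upBot s + 1))


section Helpers

def Rp (P : Finset (ℤ × ℤ)) (u v : ℤ × ℤ) : Prop := u ∈ P ∧ v ∈ P ∧ cellAdj u v

lemma fmax_eq_max' {s : Finset ℤ} (h : s.Nonempty) : fmax s = s.max' h :=
  h.csSup_eq_max'

lemma fmin_eq_min' {s : Finset ℤ} (h : s.Nonempty) : fmin s = s.min' h :=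
  h.csInf_eq_min'

lemma fmax_mem {s : Finset ℤ} (h : s.Nonempty) : fmax s ∈ s := by
  rw [fmax_eq_max' h]; exact s.max'_mem h

lemma le_fmax {s : Finset ℤ} {y : ℤ} (hy : y ∈ s) : y ≤ fmax s := by
  rw [fmax_eq_max' ⟨y, hy⟩]; exact s.le_max' y hy

lemma fmin_mem {s : Finset ℤ} (h : s.Nonempty) : fmin s ∈ s := by
  rw [fmin_eq_min' h]; exact s.min'_mem h

lemma fmin_le {s : Finset ℤ} {y : ℤ} (hy : y ∈ s) : fmin s ≤ y := by
  rw [fmin_eq_min' ⟨y, hy⟩]; exact s.min'_le y hy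

lemma fmax_eq {s : Finset ℤ} {y : ℤ} (hy : y ∈ s) (hb : ∀ z ∈ s, z ≤ y) : fmax s = y :=
  le_antisymm (by rw [fmax_eq_max' ⟨y, hy⟩]; exact Finset.max'_le _ _ _ hb) (le_fmax hy)

lemma fmin_eq {s : Finset ℤ} {y : ℤ} (hy : y ∈ s) (hb : ∀ z ∈ s, y ≤ z) : fmin s = y :=
  le_antisymm (fmin_le hy) (by rw [fmin_eq_min' ⟨y, hy⟩]; exact Finset.le_min' _ _ _ hb)

lemma fmin_mem_starts {s : Finset ℤ} (h : s.Nonempty) :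
    fmin s ∈ s.filter (fun y => y - 1 ∉ s) := by
  refine Finset.mem_filter.2 ⟨fmin_mem h, fun hc => ?_⟩
  have := fmin_le hc; omega

lemma comps_pos {s : Finset ℤ} (h : s.Nonempty) : 1 ≤ comps s :=
  Finset.card_pos.2 ⟨fmin s, fmin_mem_starts h⟩

lemma comps_empty : comps (∅ : Finset ℤ) = 0 := by simp [comps]

lemma gap_start {s : Finset ℤ} {y z : ℤ} (hy : y ∉ s) (hz : z ∈ s) (hyz : y < z) :
    ∃ w, w ∈ s ∧ w - 1 ∉ s ∧ y < w ∧ w ≤ z := by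
  set t := s.filter (fun w => y < w) with ht
  have hzt : z ∈ t := Finset.mem_filter.2 ⟨hz, hyz⟩
  have hne : t.Nonempty := ⟨z, hzt⟩
  have hwmem' : fmin t ∈ s ∧ y < fmin t := Finset.mem_filter.1 (fmin_mem hne)
  refine ⟨fmin t, hwmem'.1, fun hc => ?_, hwmem'.2, fmin_le hzt⟩
  rcases lt_trichotomy (fmin t - 1) y with h1 | h1 | h1
  · omega
  · exact hy (h1 ▸ hc)
  · have : fmin t - 1 ∈ t := Finset.mem_filter.2 ⟨hc, h1⟩
    have := fmin_le this; omega

lemma comps_one_struct {s : Finset ℤ} (h : s.Nonempty) (h1 : comps s = 1) :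
    s = Finset.Icc (fmin s) (fmax s) := by
  have hstarts : s.filter (fun y => y - 1 ∉ s) = {fmin s} := by
    rcases Finset.card_eq_one.1 h1 with ⟨a, ha⟩
    have := fmin_mem_starts h
    rw [ha] at this ⊢
    simp only [Finset.mem_singleton] at this
    rw [this]
  ext y
  simp only [Finset.mem_Icc]
  constructor
  · exact fun hy => ⟨fmin_le hy, le_fmax hy⟩
  · rintro ⟨h1', h2'⟩
    by_contra hy
    have hlt : y < fmax s := lt_of_le_of_ne h2' (fun he => hy (he ▸ fmax_mem h))
    obtain ⟨w, hws, hw1, hwy, -⟩ := gap_start hy (fmax_mem h) hlt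
    have : w ∈ s.filter (fun y => y - 1 ∉ s) := Finset.mem_filter.2 ⟨hws, hw1⟩
    rw [hstarts, Finset.mem_singleton] at this
    have := fmin_le hws; omega

lemma comps_two_struct {s : Finset ℤ} (h : s.Nonempty) (h2 : comps s = 2) :
    fmin s ≤ lowTop s ∧ lowTop s + 2 ≤ upBot s ∧ upBot s ≤ fmax s ∧
    lowTop s ∈ s ∧ upBot s ∈ s ∧ lowTop s + 1 ∉ s ∧
    s = Finset.Icc (fmin s) (lowTop s) ∪ Finset.Icc (upBot s) (fmax s) := by
  set F := s.filter (fun y => y - 1 ∉ s) with hF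
  have h2' : F.card = 2 := h2
  have hFne : F.Nonempty := Finset.card_pos.1 (by omega)
  have huF : upBot s ∈ F := fmax_mem hFne
  have huS : upBot s ∈ s := (Finset.mem_filter.1 huF).1
  have hu1 : upBot s - 1 ∉ s := (Finset.mem_filter.1 huF).2
  have hminF : fmin s ∈ F := fmin_mem_starts h
  have hne : fmin s ≠ upBot s := by
    intro he
    obtain ⟨a, b, hab, habe⟩ := Finset.card_eq_two.1 h2'
    have ha : a ∈ F := by rw [habe]; simp
    have hb : b ∈ F := by rw [habe]; simp
    have h3 : ∀ w ∈ F, w = upBot s := fun w hw =>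
      le_antisymm (le_fmax hw) (he ▸ fmin_le (Finset.mem_filter.1 hw).1)
    exact hab ((h3 a ha).trans (h3 b hb).symm)
  have hmu : fmin s < upBot s := lt_of_le_of_ne (fmin_le huS) hne
  have hFeq : ∀ w ∈ F, w = fmin s ∨ w = upBot s := by
    intro w hw
    obtain ⟨a, b, hab, habe⟩ := Finset.card_eq_two.1 h2'
    have hm := hminF; have hu := huF
    rw [habe, Finset.mem_insert, Finset.mem_singleton] at hm hu hw
    rcases hm with hm | hm <;> rcases hu with hu | hu <;> rcases hw with hw | hw <;>
      first | (left; omega) | (right; omega) | omega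
  have hfilne : (s.filter (fun y => y < upBot s)).Nonempty :=
    ⟨fmin s, Finset.mem_filter.2 ⟨fmin_mem h, hmu⟩⟩
  have hlmem := fmax_mem hfilne
  rw [Finset.mem_filter] at hlmem
  have hlS : lowTop s ∈ s := hlmem.1
  have hlu : lowTop s < upBot s := hlmem.2
  have hml : fmin s ≤ lowTop s := le_fmax (Finset.mem_filter.2 ⟨fmin_mem h, hmu⟩)
  have hl2 : lowTop s + 2 ≤ upBot s := by
    rcases lt_trichotomy (lowTop s) (upBot s - 1) with h' | h' | h'
    · omega
    · exact absurd (h' ▸ hlS) hu1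
    · omega
  have hgap : lowTop s + 1 ∉ s := by
    intro hc
    have hmf : lowTop s + 1 ∈ s.filter (fun y => y < upBot s) :=
      Finset.mem_filter.2 ⟨hc, by omega⟩
    have : lowTop s + 1 ≤ lowTop s := le_fmax hmf
    omega
  refine ⟨hml, hl2, le_fmax huS, hlS, huS, hgap, ?_⟩
  ext y
  simp only [Finset.mem_union, Finset.mem_Icc]
  constructor
  · intro hy
    rcases lt_or_ge y (upBot s) with h' | h'
    · exact Or.inl ⟨fmin_le hy, le_fmax (Finset.mem_filter.2 ⟨hy, h'⟩)⟩
    · exact Or.inr ⟨h', le_fmax hy⟩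
  · rintro (⟨ha, hb⟩ | ⟨ha, hb⟩) <;> by_contra hy
    · have hyl : y < lowTop s := lt_of_le_of_ne hb (fun he => hy (he ▸ hlS))
      obtain ⟨w, hws, hw1, hwy, hwz⟩ := gap_start hy hlS hyl
      rcases hFeq w (Finset.mem_filter.2 ⟨hws, hw1⟩) with he | he <;> omega
    · have hyl : y < fmax s := lt_of_le_of_ne hb (fun he => hy (he ▸ fmax_mem h))
      obtain ⟨w, hws, hw1, hwy, hwz⟩ := gap_start hy (fmax_mem h) hyl
      rcases hFeq w (Finset.mem_filter.2 ⟨hws, hw1⟩) with he | he <;> omega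

lemma starts_two_intervals {a b c d : ℤ} (hab : a ≤ b) (hbc : b + 2 ≤ c) (hcd : c ≤ d) :
    (Finset.Icc a b ∪ Finset.Icc c d).filter
      (fun y => y - 1 ∉ Finset.Icc a b ∪ Finset.Icc c d) = {a, c} := by
  ext y
  simp only [Finset.mem_filter, Finset.mem_union, Finset.mem_Icc, Finset.mem_insert,
    Finset.mem_singleton]
  omega

lemma comps_two_intervals {a b c d : ℤ} (hab : a ≤ b) (hbc : b + 2 ≤ c) (hcd : c ≤ d) :
    comps (Finset.Icc a b ∪ Finset.Icc c d) = 2 := by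
  rw [comps, starts_two_intervals hab hbc hcd]
  rw [Finset.card_insert_of_notMem (by simp; omega), Finset.card_singleton]

lemma comps_Icc {a b : ℤ} (hab : a ≤ b) : comps (Finset.Icc a b) = 1 := by
  have : (Finset.Icc a b).filter (fun y => y - 1 ∉ Finset.Icc a b) = {a} := by
    ext y
    simp only [Finset.mem_filter, Finset.mem_Icc, Finset.mem_singleton]
    omega
  rw [comps, this, Finset.card_singleton]

lemma stats_two_intervals {a b c d : ℤ} (hab : a ≤ b) (hbc : b + 2 ≤ c) (hcd : c ≤ d) :
    upBot (Finset.Icc a b ∪ Finset.Icc c d) = c ∧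
    lowTop (Finset.Icc a b ∪ Finset.Icc c d) = b ∧
    fmin (Finset.Icc a b ∪ Finset.Icc c d) = a ∧
    fmax (Finset.Icc a b ∪ Finset.Icc c d) = d := by
  have hu : upBot (Finset.Icc a b ∪ Finset.Icc c d) = c := by
    rw [upBot, starts_two_intervals hab hbc hcd]
    exact fmax_eq (by simp) (by intro z hz; simp at hz; omega)
  refine ⟨hu, ?_, ?_, ?_⟩
  · rw [lowTop, hu]
    have : (Finset.Icc a b ∪ Finset.Icc c d).filter (fun y => y < c) = Finset.Icc a b := by
      ext y
      simp only [Finset.mem_filter, Finset.mem_union, Finset.mem_Icc]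
      omega
    rw [this]
    exact fmax_eq (by simp [hab]) (by intro z hz; simp at hz; omega)
  · exact fmin_eq (by simp [hab]) (by intro z hz; simp at hz; omega)
  · exact fmax_eq (by simp [hcd]) (by intro z hz; simp at hz; omega)

lemma mem_colP {P : Finset (ℤ × ℤ)} {x y : ℤ} : y ∈ colP P x ↔ (x, y) ∈ P := by
  simp only [colP, Finset.mem_image, Finset.mem_filter]
  constructor
  · rintro ⟨⟨c1, c2⟩, ⟨hc, h1⟩, h2⟩
    simp only at h1 h2
    rwa [← h1, ← h2]
  · intro h
    exact ⟨(x, y), ⟨h, rfl⟩, rfl⟩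

lemma cellAdj_symm {a b : ℤ × ℤ} (h : cellAdj a b) : cellAdj b a := by
  unfold cellAdj at *; omega

lemma rtg_symm {P : Finset (ℤ × ℤ)} {a b : ℤ × ℤ}
    (h : Relation.ReflTransGen (Rp P) a b) : Relation.ReflTransGen (Rp P) b a := by
  induction h with
  | refl => exact Relation.ReflTransGen.refl
  | tail hp hs ih => exact Relation.ReflTransGen.head ⟨hs.2.1, hs.1, cellAdj_symm hs.2.2⟩ ih

lemma rtg_invariant {P : Finset (ℤ × ℤ)} {C : ℤ × ℤ → Prop}
    (hC : ∀ u v, u ∈ P → v ∈ P → cellAdj u v → C u → C v) {a b : ℤ × ℤ}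
    (h : Relation.ReflTransGen (Rp P) a b) (ha : C a) : C b := by
  induction h with
  | refl => exact ha
  | tail hp hs ih => exact hC _ _ hs.1 hs.2.1 hs.2.2 ih

lemma vert_path_up {P : Finset (ℤ × ℤ)} {x a b : ℤ}
    (h : ∀ y, a ≤ y → y ≤ b → (x, y) ∈ P) {y1 y2 : ℤ}
    (h1 : a ≤ y1) (h12 : y1 ≤ y2) (h2 : y2 ≤ b) :
    Relation.ReflTransGen (Rp P) (x, y1) (x, y2) := by
  obtain ⟨n, hn⟩ : ∃ n : ℕ, y2 - y1 = n := ⟨(y2 - y1).toNat, by omega⟩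
  induction n generalizing y2 with
  | zero =>
    have : y1 = y2 := by omega
    subst this; exact Relation.ReflTransGen.refl
  | succ n ih =>
    have hprev : Relation.ReflTransGen (Rp P) (x, y1) (x, y2 - 1) :=
      ih (by omega) (by omega) (by omega)
    exact Relation.ReflTransGen.tail hprev
      ⟨h (y2 - 1) (by omega) (by omega), h y2 (by omega) h2, Or.inl ⟨rfl, Or.inr (by omega)⟩⟩

lemma vert_path {P : Finset (ℤ × ℤ)} {x a b : ℤ}
    (h : ∀ y, a ≤ y → y ≤ b → (x, y) ∈ P) {y1 y2 : ℤ}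
    (h1 : a ≤ y1) (h1' : y1 ≤ b) (h2 : a ≤ y2) (h2' : y2 ≤ b) :
    Relation.ReflTransGen (Rp P) (x, y1) (x, y2) := by
  rcases le_total y1 y2 with hle | hle
  · exact vert_path_up h h1 hle h2'
  · exact rtg_symm (vert_path_up h h2 hle h1')

lemma poly_path {P : Finset (ℤ × ℤ)} (h : IsPolyomino P) {a b : ℤ × ℤ}
    (ha : a ∈ P) (hb : b ∈ P) : Relation.ReflTransGen (Rp P) a b :=
  h.2 a ha b hb

lemma lower_attach {P : Finset (ℤ × ℤ)} (hpoly : IsPolyomino P) {m g ylo yhi : ℤ}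
    (hm : ∀ p ∈ P, p.1 ≤ m) (hg : (m, g) ∉ P)
    (hlo : (m, ylo) ∈ P) (hhi : (m, yhi) ∈ P) (hlt : ylo < g) (hgt : g < yhi) :
    ∃ y, (m, y) ∈ P ∧ y < g ∧ (m - 1, y) ∈ P := by
  by_contra hcon
  push_neg at hcon
  have hinv : ∀ u v : ℤ × ℤ, u ∈ P → v ∈ P → cellAdj u v →
      (u.1 = m ∧ u.2 < g) → (v.1 = m ∧ v.2 < g) := by
    rintro u v hu hv hadj ⟨hux, huy⟩
    rcases hadj with ⟨hx, hy⟩ | ⟨hy, hx⟩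
    · refine ⟨hx ▸ hux, ?_⟩
      rcases hy with hy | hy
      · omega
      · rcases lt_trichotomy v.2 g with h' | h' | h'
        · exact h'
        · exfalso; apply hg
          have : v = (m, g) := Prod.ext (hx ▸ hux) h'
          exact this ▸ hv
        · omega
    · rcases hx with hx | hx
      · exfalso
        refine hcon u.2 ?_ (by omega) ?_
        · have : u = (m, u.2) := Prod.ext hux rfl
          exact this ▸ hu
        · have : v = (m - 1, u.2) := Prod.ext (by omega) hy.symm
          exact this ▸ hv
      · exfalso; have := hm v hv; omega
  have := rtg_invariant hinv (poly_path hpoly hlo hhi) ⟨rfl, hlt⟩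
  simp only at this
  omega

lemma upper_attach {P : Finset (ℤ × ℤ)} (hpoly : IsPolyomino P) {m g ylo yhi : ℤ}
    (hm : ∀ p ∈ P, p.1 ≤ m) (hg : (m, g) ∉ P)
    (hlo : (m, ylo) ∈ P) (hhi : (m, yhi) ∈ P) (hlt : ylo < g) (hgt : g < yhi) :
    ∃ y, (m, y) ∈ P ∧ g < y ∧ (m - 1, y) ∈ P := by
  by_contra hcon
  push_neg at hcon
  have hinv : ∀ u v : ℤ × ℤ, u ∈ P → v ∈ P → cellAdj u v →
      (u.1 = m ∧ g < u.2) → (v.1 = m ∧ g < v.2) := by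
    rintro u v hu hv hadj ⟨hux, huy⟩
    rcases hadj with ⟨hx, hy⟩ | ⟨hy, hx⟩
    · refine ⟨hx ▸ hux, ?_⟩
      rcases hy with hy | hy
      · rcases lt_trichotomy g v.2 with h' | h' | h'
        · exact h'
        · exfalso; apply hg
          have : v = (m, g) := Prod.ext (hx ▸ hux) h'.symm
          exact this ▸ hv
        · omega
      · omega
    · rcases hx with hx | hx
      · exfalso
        refine hcon u.2 ?_ (by omega) ?_
        · have : u = (m, u.2) := Prod.ext hux rfl
          exact this ▸ hu
        · have : v = (m - 1, u.2) := Prod.ext (by omega) hy.symm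
          exact this ▸ hv
      · exfalso; have := hm v hv; omega
  have := rtg_invariant hinv (poly_path hpoly hhi hlo) ⟨rfl, hgt⟩
  simp only at this
  omega

lemma xmax_bound {P : Finset (ℤ × ℤ)} {p : ℤ × ℤ} (hp : p ∈ P) : p.1 ≤ xmax P :=
  le_fmax (Finset.mem_image_of_mem Prod.fst hp)

lemma col_xmax_nonempty {P : Finset (ℤ × ℤ)} (h : P.Nonempty) :
    (colP P (xmax P)).Nonempty := by
  have : xmax P ∈ P.image Prod.fst := fmax_mem (h.image _)
  rcases Finset.mem_image.1 this with ⟨p, hp, hpe⟩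
  refine ⟨p.2, mem_colP.2 ?_⟩
  have : p = (xmax P, p.2) := Prod.ext hpe rfl
  exact this ▸ hp

end Helpers

section Struct

lemma mem_colQ {P : Finset (ℤ × ℤ)} {m x y : ℤ} :
    y ∈ colP (P.filter (fun p => p.1 ≠ m)) x ↔ ((x, y) ∈ P ∧ x ≠ m) := by
  rw [mem_colP, Finset.mem_filter]

lemma colQ_eq {P : Finset (ℤ × ℤ)} {m x : ℤ} (hx : x ≠ m) :
    colP (P.filter (fun p => p.1 ≠ m)) x = colP P x := by
  ext y; rw [mem_colQ, mem_colP]; tauto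

lemma colQ_self {P : Finset (ℤ × ℤ)} {m : ℤ} :
    colP (P.filter (fun p => p.1 ≠ m)) m = ∅ := by
  ext y; rw [mem_colQ]; simp

lemma Q_connected {P : Finset (ℤ × ℤ)} (hpoly : IsPolyomino P) {m a b : ℤ}
    (hm : ∀ p ∈ P, p.1 ≤ m)
    (ht : ∀ y, (m - 1, y) ∈ P ↔ (a ≤ y ∧ y ≤ b)) (hab : a ≤ b) :
    ∀ p ∈ P, p.1 ≠ m → ∀ q ∈ P, q.1 ≠ m →
      Relation.ReflTransGen (Rp (P.filter (fun p => p.1 ≠ m))) p q := by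
  set Q := P.filter (fun p => p.1 ≠ m) with hQ
  have hQmem : ∀ y, a ≤ y → y ≤ b → (m - 1, y) ∈ Q := by
    intro y h1 h2
    exact Finset.mem_filter.2 ⟨(ht y).2 ⟨h1, h2⟩, by simp⟩
  set f : ℤ × ℤ → ℤ × ℤ := fun p => if p.1 = m then (m - 1, a) else p with hf
  have hcross : ∀ u v : ℤ × ℤ, u ∈ P → v ∈ P → cellAdj u v → u.1 = m → v.1 ≠ m →
      Relation.ReflTransGen (Rp Q) (f u) (f v) := by
    intro u v hu hv hadj hum hvm
    have hveq : v = (m - 1, u.2) := by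
      rcases hadj with ⟨hx, -⟩ | ⟨hy, hx⟩
      · exact absurd (hx ▸ hum) hvm
      · rcases hx with hx | hx
        · exact Prod.ext (by omega) hy.symm
        · exact absurd (hm v hv) (by omega)
    have hu2 : a ≤ u.2 ∧ u.2 ≤ b := (ht u.2).1 (hveq ▸ hv)
    have hfu : f u = (m - 1, a) := by simp [hf, hum]
    have hfv : f v = (m - 1, u.2) := by rw [hf]; simp [hveq]
    rw [hfu, hfv]
    exact vert_path hQmem le_rfl hab hu2.1 hu2.2
  have step : ∀ u v : ℤ × ℤ, Rp P u v → Relation.ReflTransGen (Rp Q) (f u) (f v) := by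
    rintro u v ⟨hu, hv, hadj⟩
    by_cases hum : u.1 = m <;> by_cases hvm : v.1 = m
    · have : f u = f v := by simp [hf, hum, hvm]
      rw [this]
    · exact hcross u v hu hv hadj hum hvm
    · exact rtg_symm (hcross v u hv hu (cellAdj_symm hadj) hvm hum)
    · have hfu : f u = u := by simp [hf, hum]
      have hfv : f v = v := by simp [hf, hvm]
      rw [hfu, hfv]
      exact Relation.ReflTransGen.single
        ⟨Finset.mem_filter.2 ⟨hu, hum⟩, Finset.mem_filter.2 ⟨hv, hvm⟩, hadj⟩
  intro p hp hpm q hq hqm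
  have hmain : ∀ c d : ℤ × ℤ, Relation.ReflTransGen (Rp P) c d →
      Relation.ReflTransGen (Rp Q) (f c) (f d) := by
    intro c d hcd
    induction hcd with
    | refl => exact Relation.ReflTransGen.refl
    | tail hp' hs ih => exact ih.trans (step _ _ hs)
  have := hmain p q (poly_path hpoly hp hq)
  rwa [show f p = p by simp [hf, hpm], show f q = q by simp [hf, hqm]] at this

end Struct

section DomainStruct

lemma domain_struct {P : Finset (ℤ × ℤ)} (hP : IsSimplexDuplex P)
    (h2 : comps (colP P (xmax P)) = 2) :
    IsSimplexDuplex (P.filter (fun p => p.1 ≠ xmax P)) ∧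
    xmax (P.filter (fun p => p.1 ≠ xmax P)) = xmax P - 1 ∧
    comps (colP P (xmax P - 1)) = 1 ∧
    lowTop (colP P (xmax P)) ∈ colP P (xmax P - 1) ∧
    upBot (colP P (xmax P)) ∈ colP P (xmax P - 1) ∧
    lowTop (colP P (xmax P)) + 2 ≤ upBot (colP P (xmax P)) ∧
    fmin (colP P (xmax P)) ≤ lowTop (colP P (xmax P)) ∧
    upBot (colP P (xmax P)) ≤ fmax (colP P (xmax P)) ∧
    P = (P.filter (fun p => p.1 ≠ xmax P)) ∪
      (colP P (xmax P)).image (fun y => (xmax P, y)) := by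
  obtain ⟨⟨hpoly, hle2⟩, hSD⟩ := hP
  have hne := hpoly.1
  have hsne : (colP P (xmax P)).Nonempty := col_xmax_nonempty hne
  obtain ⟨hml, hl2, hum, hlS, huS, hgapS, hseq⟩ := comps_two_struct hsne h2
  have hmb : ∀ p ∈ P, p.1 ≤ xmax P := fun p hp => xmax_bound hp
  have hgP : (xmax P, lowTop (colP P (xmax P)) + 1) ∉ P := fun hc => hgapS (mem_colP.2 hc)
  obtain ⟨ylo, hyloP, hylog, hyloL⟩ :=
    lower_attach hpoly hmb hgP (mem_colP.1 hlS) (mem_colP.1 huS) (by omega) (by omega)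
  obtain ⟨yhi, hyhiP, hyhig, hyhiL⟩ :=
    upper_attach hpoly hmb hgP (mem_colP.1 hlS) (mem_colP.1 huS) (by omega) (by omega)
  have htne : (colP P (xmax P - 1)).Nonempty := ⟨ylo, mem_colP.2 hyloL⟩
  have hct1 : comps (colP P (xmax P - 1)) = 1 :=
    le_antisymm (hSD (xmax P) h2).2 (comps_pos htne)
  have hteq := comps_one_struct htne hct1
  have hylot : ylo ∈ colP P (xmax P - 1) := mem_colP.2 hyloL
  have hyhit : yhi ∈ colP P (xmax P - 1) := mem_colP.2 hyhiL
  have hyhiU : upBot (colP P (xmax P)) ≤ yhi := by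
    have hyhis : yhi ∈ colP P (xmax P) := mem_colP.2 hyhiP
    rw [hseq] at hyhis
    rcases Finset.mem_union.1 hyhis with h' | h' <;> rw [Finset.mem_Icc] at h' <;> omega
  have hyloLe : ylo ≤ lowTop (colP P (xmax P)) := by omega
  have hlmemt : lowTop (colP P (xmax P)) ∈ colP P (xmax P - 1) := by
    rw [hteq, Finset.mem_Icc]
    constructor
    · have := fmin_le hylot; omega
    · have := le_fmax hyhit; omega
  have humemt : upBot (colP P (xmax P)) ∈ colP P (xmax P - 1) := by
    rw [hteq, Finset.mem_Icc]
    constructor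
    · have := fmin_le hylot; omega
    · have := le_fmax hyhit; omega
  have hQne : (P.filter (fun p => p.1 ≠ xmax P)).Nonempty :=
    ⟨(xmax P - 1, ylo), Finset.mem_filter.2 ⟨hyloL, by simp⟩⟩
  have ht : ∀ y, (xmax P - 1, y) ∈ P ↔
      (fmin (colP P (xmax P - 1)) ≤ y ∧ y ≤ fmax (colP P (xmax P - 1))) := by
    intro y
    rw [← mem_colP]
    conv_lhs => rw [hteq]
    exact Finset.mem_Icc
  have hab : fmin (colP P (xmax P - 1)) ≤ fmax (colP P (xmax P - 1)) :=
    fmin_le (fmax_mem htne)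
  have hQpoly : IsPolyomino (P.filter (fun p => p.1 ≠ xmax P)) := by
    refine ⟨hQne, fun a ha b hb => ?_⟩
    have ha' := Finset.mem_filter.1 ha
    have hb' := Finset.mem_filter.1 hb
    exact Q_connected hpoly hmb ht hab a ha'.1 ha'.2 b hb'.1 hb'.2
  have hQle2 : ∀ x, comps (colP (P.filter (fun p => p.1 ≠ xmax P)) x) ≤ 2 := by
    intro x
    by_cases hx : x = xmax P
    · rw [hx, colQ_self, comps_empty]; omega
    · rw [colQ_eq hx]; exact hle2 x
  have hQSD : IsSimplexDuplex (P.filter (fun p => p.1 ≠ xmax P)) := by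
    refine ⟨⟨hQpoly, hQle2⟩, fun x hx2 => ?_⟩
    by_cases hx : x = xmax P
    · rw [hx, colQ_self, comps_empty] at hx2; omega
    · rw [colQ_eq hx] at hx2
      have hP2 := hSD x hx2
      constructor
      · by_cases hx1 : x + 1 = xmax P
        · rw [hx1, colQ_self, comps_empty]; omega
        · rw [colQ_eq hx1]; exact hP2.1
      · by_cases hx1 : x - 1 = xmax P
        · rw [hx1, colQ_self, comps_empty]; omega
        · rw [colQ_eq hx1]; exact hP2.2
  have hxQ : xmax (P.filter (fun p => p.1 ≠ xmax P)) = xmax P - 1 := by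
    apply fmax_eq
    · exact Finset.mem_image_of_mem Prod.fst
        (Finset.mem_filter.2 ⟨hyloL, by simp⟩)
    · intro z hz
      obtain ⟨p, hp, rfl⟩ := Finset.mem_image.1 hz
      have hp' := Finset.mem_filter.1 hp
      have := hmb p hp'.1
      have : p.1 ≠ xmax P := hp'.2
      omega
  refine ⟨hQSD, hxQ, hct1, hlmemt, humemt, hl2, hml, hum, ?_⟩
  ext p
  simp only [Finset.mem_union, Finset.mem_filter, Finset.mem_image]
  constructor
  · intro hp
    by_cases hx : p.1 = xmax P
    · have hpe : p = (xmax P, p.2) := Prod.ext hx rfl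
      exact Or.inr ⟨p.2, mem_colP.2 (hpe ▸ hp), hpe.symm⟩
    · exact Or.inl ⟨hp, hx⟩
  · rintro (⟨hp, -⟩ | ⟨y, hy, rfl⟩)
    · exact hp
    · exact mem_colP.1 hy

end DomainStruct

section Build

lemma col_empty_of_gt {Q : Finset (ℤ × ℤ)} {x : ℤ} (hx : xmax Q < x) : colP Q x = ∅ := by
  ext y
  simp only [Finset.notMem_empty, iff_false]
  intro hy
  have := xmax_bound (mem_colP.1 hy)
  simp only at this
  omega

lemma build_struct {Q : Finset (ℤ × ℤ)} {yl yu h1 h2 : ℤ}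
    (hQ : IsSimplexDuplex Q) (hQ1 : comps (colP Q (xmax Q)) = 1)
    (hyl : yl ∈ colP Q (xmax Q)) (hyu : yu ∈ colP Q (xmax Q))
    (hsep : yl + 2 ≤ yu) (hh1 : 1 ≤ h1) (hh2 : 1 ≤ h2) :
    IsSimplexDuplex (Q ∪ (Finset.Icc (yl - h1 + 1) yl ∪ Finset.Icc yu (yu + h2 - 1)).image
      (fun y => (xmax Q + 1, y))) ∧
    xmax (Q ∪ (Finset.Icc (yl - h1 + 1) yl ∪ Finset.Icc yu (yu + h2 - 1)).image
      (fun y => (xmax Q + 1, y))) = xmax Q + 1 ∧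
    colP (Q ∪ (Finset.Icc (yl - h1 + 1) yl ∪ Finset.Icc yu (yu + h2 - 1)).image
      (fun y => (xmax Q + 1, y))) (xmax Q + 1) =
      Finset.Icc (yl - h1 + 1) yl ∪ Finset.Icc yu (yu + h2 - 1) ∧
    (∀ x : ℤ, x ≠ xmax Q + 1 →
      colP (Q ∪ (Finset.Icc (yl - h1 + 1) yl ∪ Finset.Icc yu (yu + h2 - 1)).image
        (fun y => (xmax Q + 1, y))) x = colP Q x) ∧
    (Q ∪ (Finset.Icc (yl - h1 + 1) yl ∪ Finset.Icc yu (yu + h2 - 1)).image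
      (fun y => (xmax Q + 1, y))).filter (fun p => p.1 ≠ xmax Q + 1) = Q := by
  obtain ⟨⟨hQpoly, hQle2⟩, hQSD⟩ := hQ
  have hQne := hQpoly.1
  set s0 := Finset.Icc (yl - h1 + 1) yl ∪ Finset.Icc yu (yu + h2 - 1) with hs0
  set m := xmax Q + 1 with hm
  set P := Q ∪ s0.image (fun y => (m, y)) with hP
  have hQb : ∀ p ∈ Q, p.1 ≤ xmax Q := fun p hp => xmax_bound hp
  have memP : ∀ p : ℤ × ℤ, p ∈ P ↔ (p ∈ Q ∨ (p.1 = m ∧ p.2 ∈ s0)) := by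
    intro p
    rw [hP, Finset.mem_union, Finset.mem_image]
    constructor
    · rintro (hp | ⟨y, hy, rfl⟩)
      · exact Or.inl hp
      · exact Or.inr ⟨rfl, hy⟩
    · rintro (hp | ⟨hp1, hp2⟩)
      · exact Or.inl hp
      · have hpe : p = (m, p.2) := Prod.ext hp1 rfl
        exact Or.inr ⟨p.2, hp2, hpe.symm⟩
  have hcolm : colP P m = s0 := by
    ext y
    rw [mem_colP, memP]
    constructor
    · rintro (hp | ⟨-, hp⟩)
      · exfalso; have := hQb _ hp; simp only at this; omega
      · exact hp
    · intro hy; exact Or.inr ⟨rfl, hy⟩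
  have hcolne : ∀ x : ℤ, x ≠ m → colP P x = colP Q x := by
    intro x hx
    ext y
    rw [mem_colP, memP, mem_colP]
    constructor
    · rintro (hp | ⟨hp1, -⟩)
      · exact hp
      · exact absurd hp1 hx
    · exact Or.inl
  have hylb : yl - h1 + 1 ≤ yl := by omega
  have hyub : yu ≤ yu + h2 - 1 := by omega
  have hs0ne : yl ∈ s0 := by rw [hs0]; simp only [Finset.mem_union, Finset.mem_Icc]; omega
  have hyus0 : yu ∈ s0 := by rw [hs0]; simp only [Finset.mem_union, Finset.mem_Icc]; omega
  have hmylP : (m, yl) ∈ P := by rw [memP]; exact Or.inr ⟨rfl, hs0ne⟩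
  have hPb : ∀ p ∈ P, p.1 ≤ m := by
    intro p hp
    rw [memP] at hp
    rcases hp with hp | ⟨hp, -⟩
    · have := hQb p hp; omega
    · omega
  have hxP : xmax P = m := by
    apply fmax_eq
    · exact Finset.mem_image_of_mem Prod.fst hmylP
    · intro z hz
      obtain ⟨p, hp, rfl⟩ := Finset.mem_image.1 hz
      exact hPb p hp
  -- connectivity
  have htne : (colP Q (xmax Q)).Nonempty := ⟨yl, hyl⟩
  have hteq := comps_one_struct htne hQ1
  have htmm : fmin (colP Q (xmax Q)) ≤ fmax (colP Q (xmax Q)) := fmin_le (fmax_mem htne)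
  have hanchor : (xmax Q, yl) ∈ Q := mem_colP.1 hyl
  have hanchor' : (xmax Q, yu) ∈ Q := mem_colP.1 hyu
  have hQsubP : ∀ p ∈ Q, p ∈ P := fun p hp => (memP p).2 (Or.inl hp)
  have hlift : ∀ {a b : ℤ × ℤ}, Relation.ReflTransGen (Rp Q) a b →
      Relation.ReflTransGen (Rp P) a b := by
    intro a b hab
    exact Relation.ReflTransGen.mono (r := Rp Q) (p := Rp P) (fun u v h => ⟨hQsubP u h.1, hQsubP v h.2.1, h.2.2⟩) a b hab
  have hcolPmem : ∀ y ∈ s0, (m, y) ∈ P := fun y hy => (memP _).2 (Or.inr ⟨rfl, hy⟩)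
  have hall : ∀ p ∈ P, Relation.ReflTransGen (Rp P) p (xmax Q, yl) := by
    intro p hp
    rcases (memP p).1 hp with hpQ | ⟨hp1, hp2⟩
    · exact hlift (poly_path hQpoly hpQ hanchor)
    · have hpe : p = (m, p.2) := Prod.ext hp1 rfl
      rw [hpe]
      rw [hs0, Finset.mem_union, Finset.mem_Icc, Finset.mem_Icc] at hp2
      rcases hp2 with hlow | hhigh
      · have hv : Relation.ReflTransGen (Rp P) (m, p.2) (m, yl) := by
          apply vert_path (a := yl - h1 + 1) (b := yl) _ hlow.1 hlow.2 hylb le_rfl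
          intro y hy1 hy2
          apply hcolPmem
          rw [hs0, Finset.mem_union, Finset.mem_Icc, Finset.mem_Icc]; omega
        refine hv.tail ⟨hcolPmem yl hs0ne, hQsubP _ hanchor, ?_⟩
        exact Or.inr ⟨rfl, Or.inl (by omega)⟩
      · have hv : Relation.ReflTransGen (Rp P) (m, p.2) (m, yu) := by
          apply vert_path (a := yu) (b := yu + h2 - 1) _ hhigh.1 hhigh.2 le_rfl hyub
          intro y hy1 hy2
          apply hcolPmem
          rw [hs0, Finset.mem_union, Finset.mem_Icc, Finset.mem_Icc]; omega
        have hstep : Relation.ReflTransGen (Rp P) (m, yu) (xmax Q, yu) :=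
          Relation.ReflTransGen.single
            ⟨hcolPmem yu hyus0, hQsubP _ hanchor', Or.inr ⟨rfl, Or.inl (by omega)⟩⟩
        exact (hv.trans hstep).trans (hlift (poly_path hQpoly hanchor' hanchor))
  have hPpoly : IsPolyomino P := by
    refine ⟨⟨(m, yl), hmylP⟩, fun a ha b hb => ?_⟩
    exact (hall a ha).trans (rtg_symm (hall b hb))
  have hcomps2 : comps (colP P m) = 2 := by
    rw [hcolm, hs0]
    exact comps_two_intervals hylb (by omega) hyub
  have hPle2 : ∀ x, comps (colP P x) ≤ 2 := by
    intro x
    by_cases hx : x = m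
    · rw [hx, hcomps2]
    · rw [hcolne x hx]; exact hQle2 x
  have hcolgt : ∀ x : ℤ, m < x → colP P x = ∅ := by
    intro x hx
    rw [hcolne x (by omega)]
    exact col_empty_of_gt (by omega)
  have hPSD : IsSimplexDuplex P := by
    refine ⟨⟨hPpoly, hPle2⟩, fun x hx2 => ?_⟩
    by_cases hx : x = m
    · constructor
      · rw [hx, hcolgt (m + 1) (by omega), comps_empty]; omega
      · rw [hx, hcolne (m - 1) (by omega), show m - 1 = xmax Q by omega, hQ1]
    · rw [hcolne x hx] at hx2
      have hxlt : x < xmax Q := by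
        rcases lt_trichotomy x (xmax Q) with h' | h' | h'
        · exact h'
        · rw [h', hQ1] at hx2; omega
        · rw [col_empty_of_gt h', comps_empty] at hx2; omega
      have hs := hQSD x hx2
      constructor
      · rw [hcolne (x + 1) (by omega)]; exact hs.1
      · rw [hcolne (x - 1) (by omega)]; exact hs.2
  have hfilter : P.filter (fun p => p.1 ≠ m) = Q := by
    ext p
    rw [Finset.mem_filter, memP]
    constructor
    · rintro ⟨hp | ⟨hp1, -⟩, hpm⟩
      · exact hp
      · exact absurd hp1 hpm
    · intro hp
      refine ⟨Or.inl hp, ?_⟩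
      have := hQb p hp
      omega
  exact ⟨hPSD, hxP, hcolm, hcolne, hfilter⟩

end Build

/-- Every simplex-duplex polyomino either ends with a simplex column, or its
rightmost column is duplex and the column immediately to its left is simplex;
and for each `n`, removing the rightmost (duplex) column and recording the two
attachment positions and the two component heights is a bijection between
simplex-duplex polyominoes ending in a duplex column whose second-last column
has `n` cells, and triples of: an element of `S` (simplex-duplex polyominoes
ending in a simplex column) with last column of `n` cells, a choice of two
non-adjacent cells in that last column, and an ordered pair of positive
integers (the component heights). -/
theorem simplex_duplex_last_column_decomposition :
    (∀ P : Finset (ℤ × ℤ), IsSimplexDuplex P →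
      comps (colP P (xmax P)) = 1 ∨
        (comps (colP P (xmax P)) = 2 ∧ comps (colP P (xmax P - 1)) = 1)) ∧
    ∀ n : ℕ, Set.BijOn lastColSplit
      {P : Finset (ℤ × ℤ) | IsSimplexDuplex P ∧ comps (colP P (xmax P)) = 2 ∧
        (colP P (xmax P - 1)).card = n}
      {T : Finset (ℤ × ℤ) × (ℤ × ℤ) × (ℤ × ℤ) |
        IsSimplexDuplex T.1 ∧ comps (colP T.1 (xmax T.1)) = 1 ∧
        (colP T.1 (xmax T.1)).card = n ∧
        T.2.1.1 ∈ colP T.1 (xmax T.1) ∧ T.2.1.2 ∈ colP T.1 (xmax T.1) ∧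
        T.2.1.1 + 2 ≤ T.2.1.2 ∧ 1 ≤ T.2.2.1 ∧ 1 ≤ T.2.2.2} := by
  have part1 : ∀ P : Finset (ℤ × ℤ), IsSimplexDuplex P →
      comps (colP P (xmax P)) = 1 ∨
        (comps (colP P (xmax P)) = 2 ∧ comps (colP P (xmax P - 1)) = 1) := by
    intro P hP
    have hne := hP.1.1.1
    have hsne := col_xmax_nonempty hne
    have hp1 := comps_pos hsne
    have hp2 := hP.1.2 (xmax P)
    have : comps (colP P (xmax P)) = 1 ∨ comps (colP P (xmax P)) = 2 := by omega
    rcases this with h | h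
    · exact Or.inl h
    · exact Or.inr ⟨h, (domain_struct hP h).2.2.1⟩
  refine ⟨part1, fun n => ⟨?_, ?_, ?_⟩⟩
  · -- MapsTo
    rintro P ⟨hP, h2, hcard⟩
    obtain ⟨hQSD, hxQ, hct1, hlmem, humem, hl2, hml, hum, hdecomp⟩ := domain_struct hP h2
    simp only [Set.mem_setOf_eq, lastColSplit]
    have hcolrw : colP (P.filter (fun p => p.1 ≠ xmax P)) (xmax P - 1) =
        colP P (xmax P - 1) := colQ_eq (by omega)
    refine ⟨hQSD, ?_, ?_, ?_, ?_, hl2, by omega, by omega⟩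
    · rw [hxQ, hcolrw]; exact hct1
    · rw [hxQ, hcolrw]; exact hcard
    · rw [hxQ, hcolrw]; exact hlmem
    · rw [hxQ, hcolrw]; exact humem
  · -- InjOn
    rintro P1 ⟨hP1, h21, -⟩ P2 ⟨hP2, h22, -⟩ heq
    obtain ⟨-, hxQ1, -, -, -, -, hml1, hum1, hdec1⟩ := domain_struct hP1 h21
    obtain ⟨-, hxQ2, -, -, -, -, hml2, hum2, hdec2⟩ := domain_struct hP2 h22
    simp only [lastColSplit, Prod.mk.injEq] at heq
    obtain ⟨hQeq, ⟨hlt, hub⟩, hh1, hh2⟩ := heq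
    have hmeq : xmax P1 = xmax P2 := by rw [hQeq] at hxQ1; omega
    have hs1 := (comps_two_struct (col_xmax_nonempty hP1.1.1.1) h21).2.2.2.2.2.2
    have hs2 := (comps_two_struct (col_xmax_nonempty hP2.1.1.1) h22).2.2.2.2.2.2
    have hseq : colP P1 (xmax P1) = colP P2 (xmax P2) := by
      rw [hs1, hs2, hlt, hub,
        show fmin (colP P1 (xmax P1)) = fmin (colP P2 (xmax P2)) by omega,
        show fmax (colP P1 (xmax P1)) = fmax (colP P2 (xmax P2)) by omega]
    rw [hdec1, hdec2, hQeq, hseq, hmeq]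
  · -- SurjOn
    rintro ⟨Q, ⟨yl, yu⟩, ⟨h1, h2⟩⟩ ⟨hQSD, hQ1, hcard, hyl, hyu, hsep, hh1, hh2⟩
    simp only at hQ1 hcard hyl hyu hsep hh1 hh2
    obtain ⟨hPSD, hxP, hcolm, hcolne, hfilter⟩ :=
      build_struct hQSD hQ1 hyl hyu hsep hh1 hh2
    obtain ⟨hu, hl, hmn, hmx⟩ :=
      stats_two_intervals (a := yl - h1 + 1) (b := yl) (c := yu) (d := yu + h2 - 1)
        (by omega) (by omega) (by omega)
    refine ⟨Q ∪ (Finset.Icc (yl - h1 + 1) yl ∪ Finset.Icc yu (yu + h2 - 1)).image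
      (fun y => (xmax Q + 1, y)), ⟨hPSD, ?_, ?_⟩, ?_⟩
    · rw [hxP, hcolm]
      exact comps_two_intervals (by omega) (by omega) (by omega)
    · have hne1 : xmax Q ≠ xmax Q + 1 := by omega
      have hstep : xmax Q + 1 - 1 = xmax Q := by omega
      rw [hxP, hstep, hcolne (xmax Q) hne1]
      exact hcard
    · simp only [lastColSplit]
      rw [hxP, hfilter, hcolm, hu, hl, hmn, hmx]
      have e1 : yl - (yl - h1 + 1) + 1 = h1 := by omega
      have e2 : yu + h2 - 1 - yu + 1 = h2 := by omega
      rw [e1, e2]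
end
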